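/- arXiv:1808.01235 — 2 statements merged into one kernel-verified Lean document; each statement's English description precedes it below -/
import Mathlib

section
/- On the ring of symmetric functions, the skewing operator h_n^⊥ and multiplication by h_m satisfy the commutation relation h_n^⊥ ∘ (h_m ·) = ∑_{k=0}^{min(n,m)} (h_{m−k} ·) ∘ h_{n−k}^⊥ as linear endomorphisms, where f^⊥ is the Hall-inner-product adjoint of multiplication by f. -/
set_option synthInstance.maxHeartbeats 1000000
set_option maxHeartbeats 1000000

open MvPolynomial

abbrev SymF : Type := MvPolynomial ℕ+ ℚ

noncomputable def pOf (i : ℕ) : SymF := if h : 0 < i then X (⟨i, h⟩ : ℕ+) else 1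

def zPart (m : Multiset ℕ) : ℕ :=
  m.prod * m.toFinset.prod fun i => (m.count i).factorial

noncomputable def hh (n : ℕ) : SymF :=
  ∑ P : n.Partition, ((zPart P.parts : ℚ)⁻¹) • (P.parts.map pOf).prod

def zMon (d : ℕ+ →₀ ℕ) : ℕ := d.prod fun i k => (i : ℕ) ^ k * k.factorial

noncomputable def hallInner (f g : SymF) : ℚ :=
  ∑ d ∈ f.support, (zMon d : ℚ) * coeff d f * coeff d g

/-! ### Partitions vs exponent finsupps -/

/-- The multiset of a `ℕ+ →₀ ℕ`, as a multiset of naturals. -/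
noncomputable def Mof (d : ℕ+ →₀ ℕ) : Multiset ℕ := (Finsupp.toMultiset d).map (fun i : ℕ+ => (i : ℕ))

def posPn (m : Multiset ℕ) : Multiset ℕ+ :=
  m.filterMap fun x => if h : 0 < x then some (Nat.toPNat x h) else none

noncomputable def Dof (m : Multiset ℕ) : ℕ+ →₀ ℕ := (posPn m).toFinsupp

lemma posPn_cons (a : ℕ) (m : Multiset ℕ) (h : 0 < a) :
    posPn (a ::ₘ m) = Nat.toPNat a h ::ₘ posPn m := by
  apply Multiset.filterMap_cons_some
  simp [h]

lemma posPn_zero : posPn 0 = 0 := rfl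

lemma map_posPn (m : Multiset ℕ) (hm : ∀ x ∈ m, 0 < x) :
    (posPn m).map (fun i : ℕ+ => (i : ℕ)) = m := by
  induction m using Multiset.induction_on with
  | empty => rfl
  | cons a s ih =>
    rw [posPn_cons a s (hm a (Multiset.mem_cons_self a s)), Multiset.map_cons,
      ih fun x hx => hm x (Multiset.mem_cons_of_mem hx)]
    rfl

lemma Mof_Dof (m : Multiset ℕ) (hm : ∀ x ∈ m, 0 < x) : Mof (Dof m) = m := by
  rw [Mof, Dof, Multiset.toFinsupp_toMultiset, map_posPn m hm]

lemma posPn_Mof (d : ℕ+ →₀ ℕ) : posPn (Mof d) = Finsupp.toMultiset d := by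
  rw [Mof, posPn, Multiset.filterMap_map]
  have : ((fun x => if h : 0 < x then some (Nat.toPNat x h) else none) ∘ fun i : ℕ+ => (i : ℕ))
      = some := by
    funext x
    have hx : 0 < (x : ℕ) := x.2
    simp only [Function.comp_apply, hx, dif_pos]
    rfl
  rw [this]
  have := Multiset.filterMap_eq_map (α := ℕ+) (β := ℕ+) id
  have h2 : (some : ℕ+ → Option ℕ+) = some ∘ id := rfl
  rw [h2, this, Multiset.map_id]

lemma Dof_Mof (d : ℕ+ →₀ ℕ) : Dof (Mof d) = d := by
  rw [Dof, posPn_Mof, Finsupp.toMultiset_toFinsupp]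

lemma Mof_pos (d : ℕ+ →₀ ℕ) : ∀ x ∈ Mof d, 0 < x := by
  intro x hx
  rw [Mof, Multiset.mem_map] at hx
  obtain ⟨i, _, rfl⟩ := hx
  exact i.2

lemma count_Mof (d : ℕ+ →₀ ℕ) (i : ℕ+) : (Mof d).count (i : ℕ) = d i := by
  rw [Mof, Multiset.count_map_eq_count' _ _ (fun a b h => PNat.coe_injective h),
    Finsupp.count_toMultiset]

/-- weight of an exponent finsupp -/
noncomputable def wt (d : ℕ+ →₀ ℕ) : ℕ := (Mof d).sum

lemma wt_Dof (m : Multiset ℕ) (hm : ∀ x ∈ m, 0 < x) : wt (Dof m) = m.sum := by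
  rw [wt, Mof_Dof m hm]

/-! ### The finset of exponent maps of weight n -/

noncomputable def Sfin (n : ℕ) : Finset (ℕ+ →₀ ℕ) :=
  (Finset.univ : Finset (Nat.Partition n)).image fun P => Dof P.parts

/-- partition attached to a weight-`n` exponent map -/
noncomputable def partOf {n : ℕ} (d : ℕ+ →₀ ℕ) (hd : wt d = n) : Nat.Partition n :=
  ⟨Mof d, fun hi => Mof_pos d _ hi, hd⟩

lemma Dof_parts_injective (n : ℕ) :
    Function.Injective fun P : Nat.Partition n => Dof P.parts := by
  intro P Q h
  ext1
  have hP := Mof_Dof P.parts fun x hx => P.parts_pos hx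
  have hQ := Mof_Dof Q.parts fun x hx => Q.parts_pos hx
  rw [← hP, ← hQ]
  exact congrArg Mof h

lemma mem_Sfin {n : ℕ} {d : ℕ+ →₀ ℕ} : d ∈ Sfin n ↔ wt d = n := by
  constructor
  · rintro hd
    rw [Sfin, Finset.mem_image] at hd
    obtain ⟨P, -, rfl⟩ := hd
    rw [wt_Dof P.parts fun x hx => P.parts_pos hx, P.parts_sum]
  · intro hd
    rw [Sfin, Finset.mem_image]
    exact ⟨partOf d hd, Finset.mem_univ _, by rw [partOf, Dof_Mof]⟩

/-! ### `zPart` vs `zMon` -/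

lemma zMon_eq_prod (d : ℕ+ →₀ ℕ) :
    zMon d = (((Finsupp.toMultiset d).prod : ℕ+) : ℕ) * d.support.prod fun i => (d i).factorial := by
  rw [zMon, Finsupp.prod, Finset.prod_mul_distrib]
  congr 1
  rw [Finsupp.prod_toMultiset]
  have h1 : (((d.prod fun a n => a ^ n : ℕ+)) : ℕ) = PNat.coeMonoidHom (d.prod fun a n => a ^ n) := rfl
  rw [h1, map_finsuppProd, Finsupp.prod]
  apply Finset.prod_congr rfl
  intro a _
  exact (PNat.pow_coe a (d a)).symm

lemma count_posPn (m : Multiset ℕ) (hm : ∀ x ∈ m, 0 < x) (i : ℕ+) :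
    (posPn m).count i = m.count (i : ℕ) := by
  conv_rhs => rw [← map_posPn m hm]
  rw [Multiset.count_map_eq_count' _ _ (fun a b h => PNat.coe_injective h)]

lemma zPart_eq_zMon (m : Multiset ℕ) (hm : ∀ x ∈ m, 0 < x) : zPart m = zMon (Dof m) := by
  rw [zPart, zMon_eq_prod]
  congr 1
  · rw [Dof, Multiset.toFinsupp_toMultiset]
    conv_lhs => rw [← map_posPn m hm]
    have h2 : (fun i : ℕ+ => (i : ℕ)) = ⇑PNat.coeMonoidHom := rfl
    rw [h2, Multiset.prod_hom _ PNat.coeMonoidHom]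
    rfl
  · rw [Dof, Multiset.toFinsupp_support]
    symm
    apply Finset.prod_bij (fun (i : ℕ+) _ => (i : ℕ))
    · intro a ha
      rw [Multiset.mem_toFinset] at ha ⊢
      rw [← map_posPn m hm]
      exact Multiset.mem_map_of_mem _ ha
    · intro a _ b _ h
      exact PNat.coe_injective h
    · intro x hx
      rw [Multiset.mem_toFinset] at hx
      rw [← map_posPn m hm, Multiset.mem_map] at hx
      obtain ⟨i, hi, rfl⟩ := hx
      exact ⟨i, Multiset.mem_toFinset.2 hi, rfl⟩
    · intro a _
      rw [Multiset.toFinsupp_apply, count_posPn m hm]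

/-! ### the monomial form of products of power sums -/

lemma prod_pOf (m : Multiset ℕ) (hm : ∀ x ∈ m, 0 < x) :
    (m.map pOf).prod = monomial (Dof m) (1 : ℚ) := by
  induction m using Multiset.induction_on with
  | empty =>
    simp only [Multiset.map_zero, Multiset.prod_zero]
    rw [show Dof 0 = 0 from rfl, monomial_zero', C_1]
  | cons a s ih =>
    have ha : 0 < a := hm a (Multiset.mem_cons_self a s)
    rw [Multiset.map_cons, Multiset.prod_cons, ih fun x hx => hm x (Multiset.mem_cons_of_mem hx)]
    have hD : Dof (a ::ₘ s) = (Finsupp.single (Nat.toPNat a ha) 1 : ℕ+ →₀ ℕ) + Dof s := by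
      ext i
      rw [Finsupp.add_apply, Finsupp.single_apply, Dof, Dof, Multiset.toFinsupp_apply,
        Multiset.toFinsupp_apply, posPn_cons a s ha, Multiset.count_cons]
      by_cases h : i = Nat.toPNat a ha <;> simp [h, eq_comm, add_comm]
    rw [hD, monomial_single_add, pOf, dif_pos ha, pow_one]
    rfl

lemma hh_eq (n : ℕ) : hh n = ∑ d ∈ Sfin n, ((zMon d : ℚ)⁻¹) • monomial d (1 : ℚ) := by
  rw [Sfin, hh, Finset.sum_image (fun P _ Q _ h => Dof_parts_injective n h)]
  apply Finset.sum_congr rfl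
  intro P _
  rw [zPart_eq_zMon P.parts fun x hx => P.parts_pos hx,
    prod_pOf P.parts fun x hx => P.parts_pos hx]

/-! ### weight lemmas -/

lemma Mof_add (a b : ℕ+ →₀ ℕ) : Mof (a + b) = Mof a + Mof b := by
  rw [Mof, Mof, Mof, Finsupp.toMultiset_add, Multiset.map_add]

lemma wt_add (a b : ℕ+ →₀ ℕ) : wt (a + b) = wt a + wt b := by
  rw [wt, wt, wt, Mof_add, Multiset.sum_add]

lemma wt_single (i : ℕ+) (k : ℕ) : wt (Finsupp.single i k) = k * (i : ℕ) := by
  rw [wt, Mof, Finsupp.toMultiset_single, Multiset.map_nsmul, Multiset.map_singleton,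
    Multiset.nsmul_singleton, Multiset.sum_replicate, smul_eq_mul]

lemma wt_zero : wt 0 = 0 := rfl

lemma wt_eq_sum (d : ℕ+ →₀ ℕ) : wt d = d.sum fun i k => k * (i : ℕ) := by
  induction d using Finsupp.induction with
  | zero => rfl
  | single_add a n f han hn ih =>
    rw [wt_add, wt_single, ih,
      Finsupp.sum_add_index' (h := fun (i : ℕ+) (k : ℕ) => k * (i : ℕ)) (fun _ => zero_mul _)
        (fun _ k l => add_mul k l _),
      Finsupp.sum_single_index (h := fun (i : ℕ+) (k : ℕ) => k * (i : ℕ)) (zero_mul _)]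

lemma wt_eq_finset_sum (d : ℕ+ →₀ ℕ) : wt d = ∑ i ∈ d.support, d i * (i : ℕ) := by
  rw [wt_eq_sum]; rfl

lemma wt_eq_zero_iff (d : ℕ+ →₀ ℕ) : wt d = 0 ↔ d = 0 := by
  constructor
  · intro h
    ext i
    by_contra hi
    have hmem : i ∈ d.support := Finsupp.mem_support_iff.2 (by simpa using hi)
    have hle : d i * (i : ℕ) ≤ wt d := by
      rw [wt_eq_finset_sum]
      exact Finset.single_le_sum (f := fun j : ℕ+ => d j * (j : ℕ)) (fun j _ => Nat.zero_le _) hmem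
    have hipos : 0 < d i * (i : ℕ) :=
      Nat.mul_pos (Nat.pos_of_ne_zero (by simpa using hi)) i.2
    omega
  · rintro rfl; rfl

/-! ### zMon lemmas -/

lemma zMon_pos (d : ℕ+ →₀ ℕ) : 0 < zMon d := by
  rw [zMon, Finsupp.prod]
  apply Finset.prod_pos
  intro i _
  exact Nat.mul_pos (Nat.pow_pos i.2) (Nat.factorial_pos _)

lemma zMon_ne_zero (d : ℕ+ →₀ ℕ) : (zMon d : ℚ) ≠ 0 := by
  exact_mod_cast (zMon_pos d).ne'

lemma zMon_prod_subset (d : ℕ+ →₀ ℕ) (s : Finset ℕ+) (hs : d.support ⊆ s) :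
    zMon d = s.prod fun i => (i : ℕ) ^ d i * (d i).factorial := by
  rw [zMon, Finsupp.prod_of_support_subset d hs _ (fun i _ => by simp)]

lemma zMon_add_single (d : ℕ+ →₀ ℕ) (i : ℕ+) :
    zMon (d + Finsupp.single i 1) = (i : ℕ) * (d i + 1) * zMon d := by
  classical
  set s : Finset ℕ+ := insert i d.support with hs_def
  have hsub : (d + Finsupp.single i 1).support ⊆ s := by
    refine Finsupp.support_add.trans ?_
    intro x hx
    rcases Finset.mem_union.1 hx with h | h
    · exact Finset.mem_insert_of_mem h
    · rw [Finsupp.support_single_ne_zero i one_ne_zero] at h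
      simp only [Finset.mem_singleton] at h
      subst h
      exact Finset.mem_insert_self x _
  have hi_s : i ∈ s := Finset.mem_insert_self i _
  rw [zMon_prod_subset _ s hsub, zMon_prod_subset d s (Finset.subset_insert i d.support),
    ← Finset.mul_prod_erase s _ hi_s, ← Finset.mul_prod_erase s (fun i => (i : ℕ) ^ d i * (d i).factorial) hi_s]
  have herase : ∀ j ∈ s.erase i,
      (j : ℕ) ^ ((d + Finsupp.single i 1 : ℕ+ →₀ ℕ) j) * ((d + Finsupp.single i 1 : ℕ+ →₀ ℕ) j).factorial
        = (j : ℕ) ^ d j * (d j).factorial := by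
    intro j hj
    have hje : j ≠ i := Finset.ne_of_mem_erase hj
    rw [Finsupp.add_apply, Finsupp.single_eq_of_ne' (Ne.symm hje), add_zero]
  rw [Finset.prod_congr rfl herase]
  have hii : (d + Finsupp.single i 1 : ℕ+ →₀ ℕ) i = d i + 1 := by
    rw [Finsupp.add_apply, Finsupp.single_eq_same]
  rw [hii, pow_succ, Nat.factorial_succ]
  ring

/-! ### The operators `D_i = i ∂/∂p_i` -/

noncomputable def Dop (i : ℕ+) : Module.End ℚ SymF :=
  ((i : ℕ) : ℚ) • (pderiv i : Derivation ℚ SymF SymF).toLinearMap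

lemma Dop_apply (i : ℕ+) (f : SymF) : Dop i f = ((i : ℕ) : ℚ) • pderiv i f := rfl

lemma Dop_monomial (i : ℕ+) (d : ℕ+ →₀ ℕ) (c : ℚ) :
    Dop i (monomial d c) =
      monomial (d - Finsupp.single i 1) ((((i : ℕ) : ℚ) * d i) * c) := by
  rw [Dop_apply, pderiv_monomial, smul_monomial]
  congr 1
  rw [smul_eq_mul]
  ring

lemma Dop_mul (i : ℕ+) (f g : SymF) :
    Dop i (f * g) = Dop i f * g + f * Dop i g := by
  rw [Dop_apply, Dop_apply, Dop_apply, pderiv_mul, smul_add, smul_mul_assoc, mul_smul_comm]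

lemma Dop_commute (i j : ℕ+) : Dop i * Dop j = Dop j * Dop i := by
  by_cases hij : i = j
  · rw [hij]
  ext d : 2
  show Dop i (Dop j (monomial d 1)) = Dop j (Dop i (monomial d 1))
  rw [Dop_monomial, Dop_monomial, Dop_monomial, Dop_monomial]
  have hji : (d - Finsupp.single j 1 : ℕ+ →₀ ℕ) i = d i := by
    rw [Finsupp.tsub_apply, Finsupp.single_eq_of_ne' (fun h => hij h.symm), Nat.sub_zero]
  have hij' : (d - Finsupp.single i 1 : ℕ+ →₀ ℕ) j = d j := by
    rw [Finsupp.tsub_apply, Finsupp.single_eq_of_ne' hij, Nat.sub_zero]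
  rw [hji, hij']
  have hsub : d - Finsupp.single j 1 - Finsupp.single i 1
      = d - Finsupp.single i 1 - Finsupp.single j 1 := by
    ext a
    simp only [Finsupp.tsub_apply]
    omega
  rw [hsub]
  ring_nf

/-! ### Dop on hh -/

lemma Dop_monomial_term (i : ℕ+) (d : ℕ+ →₀ ℕ) :
    (zMon d : ℚ)⁻¹ • Dop i (monomial d (1 : ℚ))
      = if d i = 0 then 0
        else (zMon (d - Finsupp.single i 1) : ℚ)⁻¹ • monomial (d - Finsupp.single i 1) (1 : ℚ) := by
  rw [Dop_monomial]
  by_cases h : d i = 0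
  · rw [if_pos h, h]
    simp
  · rw [if_neg h]
    have hle : Finsupp.single i 1 ≤ d := by
      rw [Finsupp.single_le_iff]
      omega
    have hd : d - Finsupp.single i 1 + Finsupp.single i 1 = d := tsub_add_cancel_of_le hle
    have hz : (zMon d : ℚ) = ((i : ℕ) : ℚ) * (d i) * (zMon (d - Finsupp.single i 1) : ℚ) := by
      conv_lhs => rw [← hd]
      rw [zMon_add_single]
      have : (d - Finsupp.single i 1 : ℕ+ →₀ ℕ) i + 1 = d i := by
        rw [Finsupp.tsub_apply, Finsupp.single_eq_same]
        omega
      rw [this]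
      push_cast
      ring
    rw [smul_monomial, smul_monomial, smul_eq_mul, smul_eq_mul, mul_one, mul_one, hz]
    congr 1
    have hz1 := zMon_ne_zero (d - Finsupp.single i 1)
    have h2 : ((i : ℕ) : ℚ) * (d i) ≠ 0 := by
      have : (0 : ℚ) < ((i : ℕ) : ℚ) := by exact_mod_cast i.2
      have h3 : ((d i : ℕ) : ℚ) ≠ 0 := by exact_mod_cast h
      positivity
    field_simp

lemma sub_single_mem_Sfin {n : ℕ} {i : ℕ+} {d : ℕ+ →₀ ℕ} (hd : d ∈ Sfin n) (hi : d i ≠ 0) :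
    d - Finsupp.single i 1 ∈ Sfin (n - (i : ℕ)) := by
  rw [mem_Sfin] at hd ⊢
  have hle : Finsupp.single i 1 ≤ d := by rw [Finsupp.single_le_iff]; omega
  have hsum := wt_add (d - Finsupp.single i 1) (Finsupp.single i 1)
  rw [tsub_add_cancel_of_le hle, wt_single, one_mul] at hsum
  omega

lemma add_single_mem_Sfin {k : ℕ} {i : ℕ+} {b : ℕ+ →₀ ℕ} (hb : b ∈ Sfin k) :
    b + Finsupp.single i 1 ∈ Sfin (k + (i : ℕ)) := by
  rw [mem_Sfin] at hb ⊢
  rw [wt_add, wt_single, one_mul, hb]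

lemma Dop_hh_le (i : ℕ+) (n : ℕ) (hin : (i : ℕ) ≤ n) :
    Dop i (hh n) = hh (n - (i : ℕ)) := by
  rw [hh_eq, map_sum]
  have : ∀ d ∈ Sfin n, Dop i ((zMon d : ℚ)⁻¹ • monomial d (1 : ℚ))
      = if d i = 0 then 0
        else (zMon (d - Finsupp.single i 1) : ℚ)⁻¹ • monomial (d - Finsupp.single i 1) (1 : ℚ) := by
    intro d _
    rw [map_smul]
    exact Dop_monomial_term i d
  rw [Finset.sum_congr rfl this, Finset.sum_ite, Finset.sum_const_zero, zero_add, hh_eq]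
  apply Finset.sum_nbij' (i := fun d => d - Finsupp.single i 1)
    (j := fun b => b + Finsupp.single i 1)
  · intro d hd
    rw [Finset.mem_filter] at hd
    exact sub_single_mem_Sfin hd.1 hd.2
  · intro b hb
    rw [Finset.mem_filter]
    have := add_single_mem_Sfin (i := i) hb
    rw [Nat.sub_add_cancel hin] at this
    refine ⟨this, ?_⟩
    rw [Finsupp.add_apply, Finsupp.single_eq_same]
    omega
  · intro d hd
    rw [Finset.mem_filter] at hd
    have hle : Finsupp.single i 1 ≤ d := by
      rw [Finsupp.single_le_iff]
      have := hd.2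
      omega
    exact tsub_add_cancel_of_le hle
  · intro b _
    ext a
    simp only [Finsupp.tsub_apply, Finsupp.add_apply]
    omega
  · intro d _
    rfl

lemma Dop_hh_gt (i : ℕ+) (n : ℕ) (hin : n < (i : ℕ)) : Dop i (hh n) = 0 := by
  rw [hh_eq, map_sum]
  apply Finset.sum_eq_zero
  intro d hd
  rw [map_smul, Dop_monomial_term]
  rw [if_pos]
  by_contra hdi
  have hle : (i : ℕ) ≤ wt d := by
    rw [wt_eq_finset_sum]
    calc (i : ℕ) ≤ d i * i := Nat.le_mul_of_pos_left _ (Nat.pos_of_ne_zero hdi)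
    _ ≤ _ := Finset.single_le_sum (f := fun j : ℕ+ => d j * (j : ℕ))
        (fun j _ => Nat.zero_le _) (Finsupp.mem_support_iff.2 hdi)
  rw [mem_Sfin] at hd
  omega

/-! ### Newton's identity -/

lemma X_mul_hh (i : ℕ+) (k : ℕ) (n : ℕ) (hk : n = k + (i : ℕ)) :
    X i * hh k = ∑ d ∈ Sfin n,
      (if d i = 0 then 0
       else ((((i : ℕ) * d i : ℕ) : ℚ) * (zMon d : ℚ)⁻¹) • monomial d (1 : ℚ)) := by
  rw [Finset.sum_ite, Finset.sum_const_zero, zero_add, hh_eq, Finset.mul_sum]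
  apply Finset.sum_nbij' (i := fun b => b + Finsupp.single i 1)
    (j := fun d => d - Finsupp.single i 1)
  · intro b hb
    rw [Finset.mem_filter]
    refine ⟨hk ▸ add_single_mem_Sfin hb, ?_⟩
    rw [Finsupp.add_apply, Finsupp.single_eq_same]
    omega
  · intro d hd
    rw [Finset.mem_filter] at hd
    have := sub_single_mem_Sfin hd.1 hd.2
    rwa [hk, Nat.add_sub_cancel] at this
  · intro b _
    ext a
    simp only [Finsupp.tsub_apply, Finsupp.add_apply]
    omega
  · intro d hd
    rw [Finset.mem_filter] at hd
    have hle : Finsupp.single i 1 ≤ d := by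
      rw [Finsupp.single_le_iff]
      have := hd.2
      omega
    exact tsub_add_cancel_of_le hle
  · intro b _
    have happ : (b + Finsupp.single i 1 : ℕ+ →₀ ℕ) i = b i + 1 := by
      rw [Finsupp.add_apply, Finsupp.single_eq_same]
    have hmon : monomial (b + Finsupp.single i 1) (1 : ℚ) = monomial b 1 * X i := by
      rw [monomial_add_single, pow_one]
    rw [happ, hmon, mul_comm (X i), smul_mul_assoc]
    congr 1
    have hz : (zMon (b + Finsupp.single i 1) : ℚ)
        = ((i : ℕ) : ℚ) * ((b i : ℚ) + 1) * (zMon b : ℚ) := by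
      rw [zMon_add_single]
      push_cast
      ring
    rw [hz]
    have h1 := zMon_ne_zero b
    have h2 : ((i : ℕ) : ℚ) ≠ 0 := by
      have : (0 : ℕ) < (i : ℕ) := i.2
      exact_mod_cast this.ne'
    have h3 : ((b i : ℚ) + 1) ≠ 0 := by positivity
    push_cast
    field_simp

lemma newton (n : ℕ) :
    (n : ℚ) • hh n = ∑ j ∈ Finset.range n, X j.succPNat * hh (n - (j + 1)) := by
  have hstep : ∀ j ∈ Finset.range n,
      X j.succPNat * hh (n - (j + 1)) = ∑ d ∈ Sfin n,
        (if d j.succPNat = 0 then 0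
         else ((((j.succPNat : ℕ) * d j.succPNat : ℕ) : ℚ) * (zMon d : ℚ)⁻¹)
           • monomial d (1 : ℚ)) := by
    intro j hj
    rw [Finset.mem_range] at hj
    apply X_mul_hh
    have : (j.succPNat : ℕ) = j + 1 := rfl
    omega
  rw [Finset.sum_congr rfl hstep, Finset.sum_comm, hh_eq, Finset.smul_sum]
  apply Finset.sum_congr rfl
  intro d hd
  have key : ∀ j ∈ Finset.range n,
      (if d j.succPNat = 0 then 0
       else ((((j.succPNat : ℕ) * d j.succPNat : ℕ) : ℚ) * (zMon d : ℚ)⁻¹)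
         • monomial d (1 : ℚ))
      = (((((j.succPNat : ℕ) * d j.succPNat : ℕ) : ℚ) * (zMon d : ℚ)⁻¹))
          • monomial d (1 : ℚ) := by
    intro j _
    by_cases h : d j.succPNat = 0
    · rw [if_pos h, h]
      simp
    · rw [if_neg h]
  rw [Finset.sum_congr rfl key, ← Finset.sum_smul]
  have hwt : ∑ j ∈ Finset.range n, (j.succPNat : ℕ) * d j.succPNat = n := by
    rw [mem_Sfin] at hd
    have hwd := wt_eq_finset_sum d
    rw [hd] at hwd
    rw [← Finset.sum_filter_ne_zero (s := Finset.range n)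
      (f := fun j => (j.succPNat : ℕ) * d j.succPNat)]
    rw [hwd]
    apply Finset.sum_nbij' (i := fun j => j.succPNat) (j := fun i : ℕ+ => (i : ℕ) - 1)
    · intro j hj
      rw [Finset.mem_filter] at hj
      rw [Finsupp.mem_support_iff]
      intro h0
      exact hj.2 (by rw [h0, Nat.mul_zero])
    · intro i hi
      rw [Finsupp.mem_support_iff] at hi
      have hipos : 0 < (i : ℕ) := i.2
      have hsucc : ((i : ℕ) - 1).succPNat = i := by
        apply PNat.coe_injective
        show (i : ℕ) - 1 + 1 = (i : ℕ)
        omega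
      rw [Finset.mem_filter, Finset.mem_range, hsucc]
      have hle : (i : ℕ) ≤ n := by
        rw [← hd, wt_eq_finset_sum]
        calc (i : ℕ) ≤ d i * i := Nat.le_mul_of_pos_left _ (Nat.pos_of_ne_zero hi)
        _ ≤ _ := Finset.single_le_sum (f := fun j : ℕ+ => d j * (j : ℕ))
            (fun j _ => Nat.zero_le _) (Finsupp.mem_support_iff.2 hi)
      constructor
      · omega
      · intro h0
        rcases Nat.mul_eq_zero.1 h0 with h | h
        · exact absurd h (by positivity)
        · exact hi h
    · intro j _
      show (j.succPNat : ℕ) - 1 = j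
      simp [Nat.succPNat]
    · intro i hi
      rw [Finsupp.mem_support_iff] at hi
      apply PNat.coe_injective
      show (i : ℕ) - 1 + 1 = (i : ℕ)
      have : 0 < (i : ℕ) := i.2
      omega
    · intro j _
      rw [mul_comm]
  rw [← Finset.sum_mul, ← Nat.cast_sum, hwt, smul_smul]

/-! ### The skewing algebra -/

noncomputable def DAlg : Subalgebra ℚ (Module.End ℚ SymF) :=
  Algebra.adjoin ℚ (Set.range Dop)

noncomputable instance : CommRing DAlg :=
  { (inferInstance : Ring DAlg) with
    mul_comm := (Algebra.adjoinCommRingOfComm ℚ (by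
      rintro a ⟨i, rfl⟩ b ⟨j, rfl⟩
      exact Dop_commute i j)).mul_comm }

noncomputable def skewA : SymF →ₐ[ℚ] DAlg :=
  aeval fun i => (⟨Dop i, Algebra.subset_adjoin (Set.mem_range_self i)⟩ : DAlg)

noncomputable def skew (g : SymF) : Module.End ℚ SymF := (skewA g : Module.End ℚ SymF)

lemma skew_X (i : ℕ+) : skew (X i) = Dop i := by
  rw [skew, skewA, aeval_X]

lemma skew_one : skew 1 = 1 := by
  rw [skew, map_one]; rfl

lemma skew_mul (g h : SymF) : skew (g * h) = skew g * skew h := by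
  rw [skew, map_mul]; rfl

lemma skew_add (g h : SymF) : skew (g + h) = skew g + skew h := by
  rw [skew, map_add]; rfl

lemma skew_smul (c : ℚ) (g : SymF) : skew (c • g) = c • skew g := by
  rw [skew, map_smul]; rfl

lemma skew_C (c : ℚ) (u : SymF) : skew (C c) u = c • u := by
  have : (C c : SymF) = c • 1 := by rw [smul_eq_C_mul, mul_one]
  rw [this, skew_smul, skew_one]
  rfl

lemma skew_mul_apply (g h : SymF) (u : SymF) : skew (g * h) u = skew g (skew h u) := by
  rw [skew_mul]; rfl

/-- Newton's identity, operator form. -/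
lemma skew_newton (n : ℕ) (u : SymF) :
    (n : ℚ) • skew (hh n) u
      = ∑ j ∈ Finset.range n, skew (hh (n - (j + 1))) (Dop j.succPNat u) := by
  have h1 : (n : ℚ) • skew (hh n) = skew ((n : ℚ) • hh n) := (skew_smul _ _).symm
  have h2 : skew ((n : ℚ) • hh n)
      = ∑ j ∈ Finset.range n, skew (hh (n - (j + 1))) * Dop j.succPNat := by
    rw [newton, skew, map_sum]
    push_cast [Submodule.coe_sum]
    apply Finset.sum_congr rfl
    intro j _
    rw [show X j.succPNat * hh (n - (j + 1)) = hh (n - (j + 1)) * X j.succPNat from mul_comm _ _]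
    rw [← skew_X j.succPNat, ← skew_mul]
    rfl
  calc (n : ℚ) • skew (hh n) u = ((n : ℚ) • skew (hh n)) u := rfl
    _ = (∑ j ∈ Finset.range n, skew (hh (n - (j + 1))) * Dop j.succPNat) u := by rw [h1, h2]
    _ = _ := by
      rw [LinearMap.sum_apply]
      rfl

lemma hh_zero : hh 0 = 1 := by
  rw [hh_eq]
  have h1 : Sfin 0 = {0} := by
    ext d
    rw [mem_Sfin, Finset.mem_singleton, wt_eq_zero_iff]
  rw [h1, Finset.sum_singleton]
  have h2 : zMon 0 = 1 := rfl
  rw [h2, monomial_zero', C_1]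
  norm_num

lemma skew_hh_hh : ∀ k m : ℕ, skew (hh k) (hh m) = if k ≤ m then hh (m - k) else 0 := by
  intro k
  induction k using Nat.strong_induction_on with
  | _ k ih =>
  intro m
  match k, ih with
  | 0, _ =>
    rw [hh_zero, skew_one, if_pos (Nat.zero_le m), Nat.sub_zero]
    rfl
  | (k+1), ih =>
    have hne : ((k+1 : ℕ) : ℚ) ≠ 0 := by exact_mod_cast (Nat.succ_ne_zero k)
    refine smul_right_injective SymF hne ?_
    show ((k+1:ℕ):ℚ) • skew (hh (k+1)) (hh m)
      = ((k+1:ℕ):ℚ) • (if k+1 ≤ m then hh (m - (k+1)) else 0)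
    rw [skew_newton]
    have hterm : ∀ j ∈ Finset.range (k+1),
        skew (hh (k+1 - (j+1))) (Dop j.succPNat (hh m))
          = if k+1 ≤ m then hh (m - (k+1)) else 0 := by
      intro j hj
      rw [Finset.mem_range] at hj
      have hcoe : (j.succPNat : ℕ) = j + 1 := rfl
      by_cases hjm : j + 1 ≤ m
      · have hD : Dop j.succPNat (hh m) = hh (m - (j+1)) := by
          have := Dop_hh_le j.succPNat m (by omega)
          rwa [hcoe] at this
        rw [hD, ih (k+1-(j+1)) (by omega) (m - (j+1))]
        by_cases hkm : k+1 ≤ m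
        · rw [if_pos (by omega), if_pos hkm]
          congr 1
          omega
        · rw [if_neg (by omega), if_neg hkm]
      · have hD : Dop j.succPNat (hh m) = 0 := by
          apply Dop_hh_gt
          rw [hcoe]
          omega
        rw [hD, map_zero, if_neg (by omega)]
    rw [Finset.sum_congr rfl hterm, Finset.sum_const, Finset.card_range]
    rw [← Nat.cast_smul_eq_nsmul ℚ]

/-! ### triangle reindexing -/

lemma tri_reindex (N : ℕ) (F : ℕ → ℕ → SymF) :
    ∑ k ∈ Finset.range (N+1), ∑ j ∈ Finset.range k, F j k
      = ∑ j ∈ Finset.range N, ∑ k ∈ Finset.range (N-(j+1)+1), F j (j+1+k) := by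
  rw [Finset.sum_sigma', Finset.sum_sigma']
  apply Finset.sum_nbij' (i := fun p => (⟨p.2, p.1 - (p.2+1)⟩ : Σ _ : ℕ, ℕ))
    (j := fun p => (⟨p.1 + 1 + p.2, p.1⟩ : Σ _ : ℕ, ℕ))
  · rintro ⟨a, b⟩ h
    simp only [Finset.mem_sigma, Finset.mem_range] at h ⊢
    omega
  · rintro ⟨a, b⟩ h
    simp only [Finset.mem_sigma, Finset.mem_range] at h ⊢
    omega
  · rintro ⟨a, b⟩ h
    simp only [Finset.mem_sigma, Finset.mem_range] at h
    show (⟨b + 1 + (a - (b+1)), b⟩ : Σ _ : ℕ, ℕ) = ⟨a, b⟩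
    have : b + 1 + (a - (b+1)) = a := by omega
    rw [this]
  · rintro ⟨a, b⟩ h
    simp only [Finset.mem_sigma, Finset.mem_range] at h
    show (⟨a, a + 1 + b - (a+1)⟩ : Σ _ : ℕ, ℕ) = ⟨a, b⟩
    have : a + 1 + b - (a+1) = b := by omega
    rw [this]
  · rintro ⟨a, b⟩ h
    simp only [Finset.mem_sigma, Finset.mem_range] at h
    show F b a = F b (b + 1 + (a - (b+1)))
    have : b + 1 + (a - (b+1)) = a := by omega
    rw [this]

lemma tri_swap (N : ℕ) (F : ℕ → ℕ → SymF) :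
    ∑ k ∈ Finset.range (N+1), ∑ j ∈ Finset.range (N-k), F k j
      = ∑ j ∈ Finset.range N, ∑ k ∈ Finset.range (N-(j+1)+1), F k j := by
  rw [Finset.sum_sigma', Finset.sum_sigma']
  apply Finset.sum_nbij' (i := fun p => (⟨p.2, p.1⟩ : Σ _ : ℕ, ℕ))
    (j := fun p => (⟨p.2, p.1⟩ : Σ _ : ℕ, ℕ))
  · rintro ⟨a, b⟩ h
    simp only [Finset.mem_sigma, Finset.mem_range] at h ⊢
    omega
  · rintro ⟨a, b⟩ h
    simp only [Finset.mem_sigma, Finset.mem_range] at h ⊢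
    omega
  · rintro ⟨a, b⟩ _
    rfl
  · rintro ⟨a, b⟩ _
    rfl
  · rintro ⟨a, b⟩ _
    rfl

lemma skew_hh_mul : ∀ (n : ℕ) (u v : SymF), skew (hh n) (u * v)
    = ∑ k ∈ Finset.range (n+1), skew (hh k) u * skew (hh (n-k)) v := by
  intro n
  induction n using Nat.strong_induction_on with
  | _ n ih =>
  match n, ih with
  | 0, _ =>
    intro u v
    rw [hh_zero, skew_one, Finset.sum_range_one, Nat.sub_zero, hh_zero, skew_one]
    rfl
  | (N+1), ih =>
    intro u v
    have hne : ((N+1 : ℕ) : ℚ) ≠ 0 := by exact_mod_cast (Nat.succ_ne_zero N)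
    refine smul_right_injective SymF hne ?_
    show ((N+1:ℕ):ℚ) • skew (hh (N+1)) (u * v)
      = ((N+1:ℕ):ℚ) • ∑ k ∈ Finset.range (N+1+1), skew (hh k) u * skew (hh (N+1-k)) v
    rw [skew_newton]
    have hL : ∀ j ∈ Finset.range (N+1),
        skew (hh (N+1-(j+1))) (Dop j.succPNat (u*v))
          = (∑ k ∈ Finset.range (N-j+1), skew (hh k) (Dop j.succPNat u) * skew (hh (N-j-k)) v)
          + ∑ k ∈ Finset.range (N-j+1), skew (hh k) u * skew (hh (N-j-k)) (Dop j.succPNat v) := by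
      intro j hj
      rw [Finset.mem_range] at hj
      have h1 : N+1-(j+1) = N-j := by omega
      rw [h1, Dop_mul, map_add, ih (N-j) (by omega), ih (N-j) (by omega)]
    rw [Finset.sum_congr rfl hL, Finset.sum_add_distrib]
    have hsplit : ∀ k ∈ Finset.range (N+1+1),
        ((N+1:ℕ):ℚ) • (skew (hh k) u * skew (hh (N+1-k)) v)
          = ((k:ℚ) • skew (hh k) u) * skew (hh (N+1-k)) v
            + skew (hh k) u * (((N+1-k : ℕ):ℚ) • skew (hh (N+1-k)) v) := by
      intro k hk
      rw [Finset.mem_range] at hk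
      have hcast : ((N+1:ℕ):ℚ) = (k:ℚ) + ((N+1-k:ℕ):ℚ) := by
        have h0 : N+1-k+k = N+1 := by omega
        calc ((N+1:ℕ):ℚ) = ((N+1-k+k : ℕ):ℚ) := by rw [h0]
        _ = _ := by push_cast; ring
      rw [hcast, add_smul, smul_mul_assoc, mul_smul_comm]
    rw [Finset.smul_sum, Finset.sum_congr rfl hsplit, Finset.sum_add_distrib]
    congr 1
    · have h2 : ∀ k ∈ Finset.range (N+1+1),
          ((k:ℚ) • skew (hh k) u) * skew (hh (N+1-k)) v
            = ∑ j ∈ Finset.range k,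
                skew (hh (k-(j+1))) (Dop j.succPNat u) * skew (hh (N+1-k)) v := by
        intro k _
        rw [skew_newton, Finset.sum_mul]
      rw [Finset.sum_congr rfl h2, tri_reindex (N+1)
        (fun j k => skew (hh (k-(j+1))) (Dop j.succPNat u) * skew (hh (N+1-k)) v)]
      apply Finset.sum_congr rfl
      intro j hj
      rw [Finset.mem_range] at hj
      have hr : N+1-(j+1)+1 = N-j+1 := by omega
      rw [hr]
      apply Finset.sum_congr rfl
      intro k hk
      rw [Finset.mem_range] at hk
      have e1 : j+1+k-(j+1) = k := by omega
      have e2 : N+1-(j+1+k) = N-j-k := by omega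
      rw [e1, e2]
    · have h3 : ∀ k ∈ Finset.range (N+1+1),
          skew (hh k) u * (((N+1-k : ℕ):ℚ) • skew (hh (N+1-k)) v)
            = ∑ j ∈ Finset.range (N+1-k),
                skew (hh k) u * skew (hh (N+1-k-(j+1))) (Dop j.succPNat v) := by
        intro k _
        rw [skew_newton, Finset.mul_sum]
      rw [Finset.sum_congr rfl h3, tri_swap (N+1)
        (fun k j => skew (hh k) u * skew (hh (N+1-k-(j+1))) (Dop j.succPNat v))]
      apply Finset.sum_congr rfl
      intro j hj
      rw [Finset.mem_range] at hj
      have hr : N+1-(j+1)+1 = N-j+1 := by omega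
      rw [hr]
      apply Finset.sum_congr rfl
      intro k hk
      rw [Finset.mem_range] at hk
      have e2 : N+1-k-(j+1) = N-j-k := by omega
      rw [e2]

/-! ### Hall inner product lemmas -/

lemma hallInner_eq_of_subset (f g : SymF) (s : Finset (ℕ+ →₀ ℕ)) (hs : f.support ⊆ s) :
    hallInner f g = ∑ d ∈ s, (zMon d : ℚ) * coeff d f * coeff d g := by
  rw [hallInner]
  apply Finset.sum_subset hs
  intro d _ hd
  rw [notMem_support_iff] at hd
  rw [hd, mul_zero, zero_mul]

lemma hallInner_comm (f g : SymF) : hallInner f g = hallInner g f := by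
  rw [hallInner_eq_of_subset f g (f.support ∪ g.support) Finset.subset_union_left,
    hallInner_eq_of_subset g f (f.support ∪ g.support) Finset.subset_union_right]
  apply Finset.sum_congr rfl
  intro d _
  ring

lemma hallInner_add_right (f g h : SymF) :
    hallInner f (g + h) = hallInner f g + hallInner f h := by
  rw [hallInner, hallInner, hallInner, ← Finset.sum_add_distrib]
  apply Finset.sum_congr rfl
  intro d _
  rw [coeff_add]
  ring

lemma hallInner_smul_right (c : ℚ) (f g : SymF) :
    hallInner f (c • g) = c * hallInner f g := by
  rw [hallInner, hallInner, Finset.mul_sum]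
  apply Finset.sum_congr rfl
  intro d _
  rw [coeff_smul, smul_eq_mul]
  ring

lemma hallInner_add_left (f g h : SymF) :
    hallInner (f + g) h = hallInner f h + hallInner g h := by
  rw [hallInner_comm, hallInner_add_right, hallInner_comm h f, hallInner_comm h g]

lemma hallInner_smul_left (c : ℚ) (f g : SymF) :
    hallInner (c • f) g = c * hallInner f g := by
  rw [hallInner_comm, hallInner_smul_right, hallInner_comm g f]

lemma hallInner_monomial_right (f : SymF) (d : ℕ+ →₀ ℕ) :
    hallInner f (monomial d 1) = (zMon d : ℚ) * coeff d f := by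
  rw [hallInner]
  rw [Finset.sum_eq_single d]
  · rw [coeff_monomial, if_pos rfl, mul_one]
  · intro e _ hne
    rw [coeff_monomial, if_neg (fun h => hne h.symm), mul_zero]
  · intro hd
    rw [notMem_support_iff] at hd
    rw [hd, coeff_monomial, if_pos rfl]
    ring

lemma hallInner_ext {a b : SymF} (h : ∀ v, hallInner a v = hallInner b v) : a = b := by
  apply MvPolynomial.ext
  intro d
  have hd := h (monomial d 1)
  rw [hallInner_monomial_right, hallInner_monomial_right] at hd
  exact mul_left_cancel₀ (zMon_ne_zero d) hd

lemma hallInner_monomial_monomial (a b : ℕ+ →₀ ℕ) (c e : ℚ) :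
    hallInner (monomial a c) (monomial b e)
      = if b = a then (zMon a : ℚ) * c * e else 0 := by
  rw [hallInner_eq_of_subset (monomial a c) _ {a} (support_monomial_subset),
    Finset.sum_singleton, coeff_monomial, if_pos rfl, coeff_monomial]
  by_cases h : b = a
  · rw [if_pos h, if_pos h]
  · rw [if_neg h, if_neg h, mul_zero]

lemma hallInner_Dop (i : ℕ+) (u v : SymF) :
    hallInner (Dop i u) v = hallInner u (X i * v) := by
  induction u using MvPolynomial.induction_on' with
  | add p q hp hq =>
    rw [map_add, hallInner_add_left, hallInner_add_left, hp, hq]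
  | monomial a c =>
    induction v using MvPolynomial.induction_on' with
    | add p q hp hq =>
      rw [mul_add, hallInner_add_right, hallInner_add_right, hp, hq]
    | monomial b e =>
      rw [Dop_monomial, hallInner_monomial_monomial]
      have hXmul : X i * monomial b e = monomial (b + Finsupp.single i 1) e := by
        rw [monomial_add_single, pow_one, mul_comm]
      rw [hXmul, hallInner_monomial_monomial]
      by_cases hai : a i = 0
      · rw [hai]
        have h1 : (((i : ℕ) : ℚ) * (0 : ℕ)) * c = 0 := by push_cast; ring
        rw [h1]
        have h2 : ¬ (b + Finsupp.single i 1 = a) := by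
          intro h
          have h3 : (b + Finsupp.single i 1 : ℕ+ →₀ ℕ) i = a i := by rw [h]
          rw [Finsupp.add_apply, Finsupp.single_eq_same, hai] at h3
          omega
        rw [if_neg h2]
        by_cases hb : b = a - Finsupp.single i 1
        · rw [if_pos hb]; ring
        · rw [if_neg hb]
      · have hle : Finsupp.single i 1 ≤ a := by
          rw [Finsupp.single_le_iff]; omega
        have hsub : a - Finsupp.single i 1 + Finsupp.single i 1 = a := tsub_add_cancel_of_le hle
        have hiff : (b = a - Finsupp.single i 1) ↔ (b + Finsupp.single i 1 = a) := by
          constructor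
          · rintro rfl; exact hsub
          · rintro rfl
            ext x
            simp only [Finsupp.tsub_apply, Finsupp.add_apply]
            omega
        by_cases hb : b = a - Finsupp.single i 1
        · rw [if_pos hb, if_pos (hiff.1 hb)]
          have hz : (zMon a : ℚ)
              = ((i : ℕ) : ℚ) * (a i : ℚ) * (zMon (a - Finsupp.single i 1) : ℚ) := by
            conv_lhs => rw [← hsub]
            rw [zMon_add_single]
            have h3 : (a - Finsupp.single i 1 : ℕ+ →₀ ℕ) i + 1 = a i := by
              rw [Finsupp.tsub_apply, Finsupp.single_eq_same]
              omega
            rw [h3]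
            push_cast
            ring
          rw [hz]
          ring
        · rw [if_neg hb, if_neg (fun h => hb (hiff.2 h))]

lemma hallInner_skew (g : SymF) : ∀ u v : SymF,
    hallInner (skew g u) v = hallInner u (g * v) := by
  induction g using MvPolynomial.induction_on with
  | C c =>
    intro u v
    rw [skew_C, hallInner_smul_left, ← smul_eq_C_mul, hallInner_smul_right]
  | add p q hp hq =>
    intro u v
    rw [skew_add, LinearMap.add_apply, hallInner_add_left, hp, hq, add_mul,
      hallInner_add_right]
  | mul_X p i hp =>
    intro u v
    rw [skew_mul_apply, skew_X, hp (Dop i u) v, hallInner_Dop]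
    congr 1
    ring

/-! ### Main theorem -/

/-- If `Hp n` (`= h_n^⊥`) is the Hall-adjoint of multiplication by `h_n`, then
`h_n^⊥ ∘ (h_m ·) = ∑_{k=0}^{min(n,m)} (h_{m-k} ·) ∘ h_{n-k}^⊥`. -/
theorem statement8 (Hp : ℕ → SymF →ₗ[ℚ] SymF)
    (hHp : ∀ (k : ℕ) (u v : SymF), hallInner (Hp k u) v = hallInner u (hh k * v))
    (n m : ℕ) (f : SymF) :
    Hp n (hh m * f) = ∑ k ∈ Finset.range (min n m + 1), hh (m - k) * Hp (n - k) f := by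
  have hskew : ∀ (k : ℕ) (u : SymF), Hp k u = skew (hh k) u := fun k u =>
    hallInner_ext fun v => by rw [hHp, hallInner_skew]
  rw [hskew, skew_hh_mul]
  have hterm : ∀ k ∈ Finset.range (n+1),
      skew (hh k) (hh m) * skew (hh (n-k)) f
        = if k ≤ m then hh (m-k) * Hp (n-k) f else 0 := by
    intro k _
    rw [skew_hh_hh, hskew]
    by_cases h : k ≤ m
    · rw [if_pos h, if_pos h]
    · rw [if_neg h, if_neg h, zero_mul]
  rw [Finset.sum_congr rfl hterm]
  have hsmall : ∀ k ∈ Finset.range (min n m + 1),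
      hh (m-k) * Hp (n-k) f = if k ≤ m then hh (m-k) * Hp (n-k) f else 0 := by
    intro k hk
    rw [Finset.mem_range] at hk
    rw [if_pos (by omega)]
  rw [Finset.sum_congr rfl hsmall]
  symm
  apply Finset.sum_subset
  · intro k hk
    rw [Finset.mem_range] at hk ⊢
    omega
  · intro k hk1 hk2
    rw [Finset.mem_range] at hk1 hk2
    rw [if_neg (by omega)]
end

section
/- Gaussian elimination: Let A be an additive category and consider a three-term segment of a chain complex U → X ⊕ Y → Z ⊕ W → V, where the middle differential is the matrix ((C, D), (A, B)) with D : Y → Z an isomorphism. Then this complex is chain homotopy equivalent to the complex U → X → W → V with middle differential A − B D^{−1} C (and induced outer maps), via an explicit homotopy equivalence. -/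
open CategoryTheory CategoryTheory.Limits

/-- **Gaussian elimination.**  Consider a four-term segment of a chain complex
`U ⟶ X ⊞ Y ⟶ Z ⊞ W ⟶ V` in an additive category, where the middle differential has
matrix `((C, D), (A, B))` (components `C : X ⟶ Z`, `D : Y ⟶ Z`, `A : X ⟶ W`,
`B : Y ⟶ W`) and `D` is an isomorphism.  Then this complex is chain homotopy
equivalent to the complex `U ⟶ X ⟶ W ⟶ V` with middle differential `A − B D⁻¹ C`
and the induced outer maps, via an explicit homotopy equivalence (which is the
identity on `U` and `V`). -/
theorem statement14 {𝒜 : Type*} [Category 𝒜] [Preadditive 𝒜] [HasBinaryBiproducts 𝒜]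
    {U X Y Z W V : 𝒜}
    (uX : U ⟶ X) (uY : U ⟶ Y)
    (A : X ⟶ W) (B : Y ⟶ W) (C : X ⟶ Z) (D : Y ⟶ Z) [IsIso D]
    (vZ : Z ⟶ V) (vW : W ⟶ V)
    (hd21 : biprod.lift uX uY ≫ biprod.desc (biprod.lift C A) (biprod.lift D B) = 0)
    (hd32 : biprod.desc (biprod.lift C A) (biprod.lift D B) ≫ biprod.desc vZ vW = 0) :
    ∃ (F1 : X ⊞ Y ⟶ X) (F2 : Z ⊞ W ⟶ W) (G1 : X ⟶ X ⊞ Y) (G2 : W ⟶ Z ⊞ W)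
      (h1 : X ⊞ Y ⟶ U) (h2 : Z ⊞ W ⟶ X ⊞ Y) (h3 : V ⟶ Z ⊞ W)
      (k1 : X ⟶ U) (k2 : W ⟶ X) (k3 : V ⟶ W),
      -- `F` is a chain map from the big complex to the reduced one (identity on `U`, `V`)
      biprod.lift uX uY ≫ F1 = uX ∧
      biprod.desc (biprod.lift C A) (biprod.lift D B) ≫ F2 = F1 ≫ (A - C ≫ inv D ≫ B) ∧
      biprod.desc vZ vW = F2 ≫ vW ∧
      -- `G` is a chain map from the reduced complex to the big one (identity on `U`, `V`)
      uX ≫ G1 = biprod.lift uX uY ∧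
      (A - C ≫ inv D ≫ B) ≫ G2 = G1 ≫ biprod.desc (biprod.lift C A) (biprod.lift D B) ∧
      vW = G2 ≫ biprod.desc vZ vW ∧
      -- `h` is a homotopy from `F ≫ G` to the identity of the big complex
      biprod.lift uX uY ≫ h1 = 0 ∧
      𝟙 (X ⊞ Y) - F1 ≫ G1
        = h1 ≫ biprod.lift uX uY
            + biprod.desc (biprod.lift C A) (biprod.lift D B) ≫ h2 ∧
      𝟙 (Z ⊞ W) - F2 ≫ G2
        = h2 ≫ biprod.desc (biprod.lift C A) (biprod.lift D B)
            + biprod.desc vZ vW ≫ h3 ∧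
      h3 ≫ biprod.desc vZ vW = 0 ∧
      -- `k` is a homotopy from `G ≫ F` to the identity of the reduced complex
      uX ≫ k1 = 0 ∧
      𝟙 X - G1 ≫ F1 = k1 ≫ uX + (A - C ≫ inv D ≫ B) ≫ k2 ∧
      𝟙 W - G2 ≫ F2 = k2 ≫ (A - C ≫ inv D ≫ B) + vW ≫ k3 ∧
      k3 ≫ vW = 0 := by
  have huY : uX ≫ C + uY ≫ D = 0 := by
    have := congrArg (· ≫ biprod.fst) hd21
    simpa using this
  have huY' : uY = -(uX ≫ C ≫ inv D) := by
    rw [← cancel_mono D]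
    simp only [Preadditive.neg_comp, Category.assoc, IsIso.inv_hom_id, Category.comp_id]
    linear_combination (norm := (simp; try abel)) huY
  have hvZ : D ≫ vZ + B ≫ vW = 0 := by
    have := congrArg (biprod.inr ≫ ·) hd32
    simpa using this
  have hvZ' : vZ = -(inv D ≫ B ≫ vW) := by
    rw [← cancel_epi D]
    simp only [Preadditive.comp_neg, IsIso.hom_inv_id_assoc]
    linear_combination (norm := (simp; try abel)) hvZ
  refine ⟨biprod.fst, biprod.desc (-(inv D ≫ B)) (𝟙 W),
    biprod.lift (𝟙 X) (-(C ≫ inv D)), biprod.lift 0 (𝟙 W),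
    0, biprod.desc (biprod.lift 0 (inv D)) 0, 0, 0, 0, 0,
    ?_, ?_, ?_, ?_, ?_, ?_, ?_, ?_, ?_, ?_, ?_, ?_, ?_, ?_⟩
  · simp
  · ext <;> simp <;> abel
  · ext <;> simp [hvZ']
  · ext <;> simp [huY']
  · ext <;> simp <;> abel
  · simp
  · simp
  · ext <;> simp
  · ext <;> simp
  · simp
  · simp
  · simp
  · simp
  · simp
end
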